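/- Let p be prime, k ≥ 1, and GF(p^k) the field with p^k elements. On GF(p^k)⁴ define a∘b = a⁽¹⁾b⁽²⁾ − a⁽²⁾b⁽¹⁾ + a⁽³⁾b⁽⁴⁾ − a⁽⁴⁾b⁽³⁾. There exist a ℤ/p-linear functional φ : GF(p^k) → ℤ/p and a ℤ/p-linear isomorphism π₁ : GF(p^k)⁴ → (ℤ/p)^{4k} such that φ(a∘b) = π₁(a)∘π₁(b) for all a, b, where the symplectic form on (ℤ/p)^{4k} = ((ℤ/p)^k)⁴ is u∘v = Σᵢ (uᵢ⁽¹⁾vᵢ⁽²⁾ − uᵢ⁽²⁾vᵢ⁽¹⁾ + uᵢ⁽³⁾vᵢ⁽⁴⁾ − uᵢ⁽⁴⁾vᵢ⁽³⁾). -/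

import Mathlib

open Finset

/-- The symplectic product on `GF(p^k)⁴`. -/
noncomputable def symplGF {p k : ℕ} [Fact p.Prime] (a b : Fin 4 → GaloisField p k) : GaloisField p k :=
  a 0 * b 1 - a 1 * b 0 + a 2 * b 3 - a 3 * b 2

/-- The symplectic product on `(ℤ/p)^{4k} = ((ℤ/p)^k)⁴`. -/
def symplZ {p k : ℕ} (u v : Fin 4 → Fin k → ZMod p) : ZMod p :=
  ∑ i : Fin k,
    (u 0 i * v 1 i - u 1 i * v 0 i + u 2 i * v 3 i - u 3 i * v 2 i)

theorem stmt17 {p k : ℕ} [Fact p.Prime] (hk : 1 ≤ k) :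
    ∃ (φ : GaloisField p k →ₗ[ZMod p] ZMod p)
      (π₁ : (Fin 4 → GaloisField p k) ≃ₗ[ZMod p] (Fin 4 → Fin k → ZMod p)),
      ∀ a b : Fin 4 → GaloisField p k,
        φ (symplGF a b) = symplZ (π₁ a) (π₁ b) := by
  classical
  have hk0 : k ≠ 0 := by omega
  haveI : FiniteDimensional (ZMod p) (GaloisField p k) := by infer_instance
  let e : Module.Basis (Fin k) (ZMod p) (GaloisField p k) :=
    Module.finBasisOfFinrankEq (ZMod p) (GaloisField p k) (GaloisField.finrank p hk0)
  let φ : GaloisField p k →ₗ[ZMod p] ZMod p := e.coord ⟨0, hk⟩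
  let B : LinearMap.BilinForm (ZMod p) (GaloisField p k) :=
    (LinearMap.mul (ZMod p) (GaloisField p k)).compr₂ φ
  have hBapp : ∀ x y, B x y = φ (x * y) := fun x y => rfl
  have hφe : φ (e ⟨0, hk⟩) = 1 := by
    simp [φ, Module.Basis.coord_apply, Module.Basis.repr_self]
  have hB : B.Nondegenerate := by
    refine ⟨fun x hx => ?_, fun x hx => ?_⟩
    · by_contra hx0
      have := hx (x⁻¹ * e ⟨0, hk⟩)
      rw [hBapp, ← mul_assoc, mul_inv_cancel₀ hx0, one_mul, hφe] at this
      exact one_ne_zero this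
    · by_contra hx0
      have := hx (x⁻¹ * e ⟨0, hk⟩)
      rw [hBapp, mul_comm, ← mul_assoc, mul_inv_cancel₀ hx0, one_mul, hφe] at this
      exact one_ne_zero this
  have hsym : B.IsSymm := by
    rw [LinearMap.BilinForm.isSymm_def]
    intro x y
    simp [hBapp, mul_comm]
  let f : Module.Basis (Fin k) (ZMod p) (GaloisField p k) := B.dualBasis hB e
  -- the two relevant bilinear maps agree
  have key : ∀ x y, φ (x * y) = ∑ i : Fin k, e.equivFun x i * f.equivFun y i := by
    have h1 : B = LinearMap.mk₂ (ZMod p)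
        (fun x y => ∑ i : Fin k, e.equivFun x i * f.equivFun y i)
        (by intros; simp [Finset.sum_add_distrib, add_mul])
        (by intros; simp [Finset.mul_sum]; exact Finset.sum_congr rfl fun _ _ => by ring)
        (by intros; simp [Finset.sum_add_distrib, mul_add])
        (by intros; simp [Finset.mul_sum]; exact Finset.sum_congr rfl fun _ _ => by ring) := by
      apply LinearMap.ext_basis e f
      intro i j
      rw [LinearMap.BilinForm.apply_dualBasis_right hB hsym]
      simp [Module.Basis.equivFun_apply, Module.Basis.repr_self, Finsupp.single_apply]
    intro x y
    have := congrArg (fun L => L x y) h1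
    try simp only [LinearMap.mk₂_apply] at this
    rw [← hBapp, this]; rfl
  refine ⟨φ, LinearEquiv.piCongrRight ![e.equivFun, f.equivFun, e.equivFun, f.equivFun], ?_⟩
  intro a b
  simp only [symplGF, symplZ, LinearEquiv.piCongrRight_apply]
  rw [map_sub, map_add, map_sub]
  rw [key (a 0) (b 1), key (a 2) (b 3)]
  rw [show a 1 * b 0 = b 0 * a 1 from mul_comm _ _,
      show a 3 * b 2 = b 2 * a 3 from mul_comm _ _]
  rw [key (b 0) (a 1), key (b 2) (a 3)]
  rw [← Finset.sum_sub_distrib, ← Finset.sum_add_distrib, ← Finset.sum_sub_distrib]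
  apply Finset.sum_congr rfl
  intro i _
  simp [Matrix.cons_val_zero, Matrix.cons_val_one]
  ring
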